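/- Let (X_a)_{a∈A} be a family of nonempty finite integer sets indexed by a nonempty finite set A. The minimum of |⋃_{a∈A} (X_a + t_a)| over all (t_a) ∈ ℤ^A is attained, and it is attained at some family (t_a) with t_b − t_c ∈ (⋃_a X_a) − (⋃_a X_a) for all b, c connected by an edge of some spanning tree of the intersection graph of the shifted family. -/

import Mathlib

/-- The translate `S + t = {s + t : s ∈ S}`. -/
def shift (S : Finset ℤ) (t : ℤ) : Finset ℤ := S.image (· + t)

open SimpleGraph in
private lemma del_edge_preconnected {V : Type*} {G : SimpleGraph V} (hG : G.Preconnected)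
    {v w : V} (h : (G \ SimpleGraph.fromEdgeSet {s(v, w)}).Reachable v w) :
    (G \ SimpleGraph.fromEdgeSet {s(v, w)}).Preconnected := by
  intro x y
  obtain ⟨p⟩ := hG x y
  induction p with
  | nil => exact Reachable.refl _
  | @cons u u' z h1 p ih =>
    refine Reachable.trans ?_ ih
    by_cases he : s(u, u') = s(v, w)
    · rw [Sym2.eq, Sym2.rel_iff'] at he
      rcases he with he | he
      · rw [Prod.ext_iff] at he
        obtain ⟨rfl, rfl⟩ := he
        exact h
      · rw [Prod.ext_iff] at he
        obtain ⟨rfl, rfl⟩ := he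
        exact h.symm
    · exact SimpleGraph.Adj.reachable (by
        simp only [SimpleGraph.sdiff_adj, SimpleGraph.fromEdgeSet_adj, Set.mem_singleton_iff]
        exact ⟨h1, fun hc => he hc.1⟩)

private lemma exists_spanning_tree {V : Type*} [Fintype V] {G : SimpleGraph V}
    (hG : G.Connected) : ∃ T : SimpleGraph V, T ≤ G ∧ T.Connected ∧ T.IsAcyclic := by
  classical
  let S : Set ℕ := {n | ∃ s : Finset (Sym2 V), (↑s : Set (Sym2 V)) ⊆ G.edgeSet ∧
      (SimpleGraph.fromEdgeSet (↑s : Set (Sym2 V))).Connected ∧ s.card = n}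
  have hSne : S.Nonempty := by
    refine ⟨G.edgeFinset.card, G.edgeFinset, ?_, ?_, rfl⟩
    · rw [SimpleGraph.coe_edgeFinset]
    · rw [SimpleGraph.coe_edgeFinset, SimpleGraph.fromEdgeSet_edgeSet]; exact hG
  obtain ⟨s, hsub, hconn, hcard⟩ := Nat.sInf_mem hSne
  refine ⟨SimpleGraph.fromEdgeSet ↑s, ?_, hconn, ?_⟩
  · calc SimpleGraph.fromEdgeSet ↑s ≤ SimpleGraph.fromEdgeSet G.edgeSet :=
        SimpleGraph.fromEdgeSet_mono hsub
      _ = G := SimpleGraph.fromEdgeSet_edgeSet G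
  · intro x c hc
    have hne : c.edges ≠ [] := by
      have h3 := hc.three_le_length
      have hl := c.length_edges
      intro habs
      rw [habs] at hl
      simp at hl
      omega
    obtain ⟨e, he⟩ : ∃ e, e ∈ c.edges := List.exists_mem_of_ne_nil _ hne
    induction e using Sym2.ind with
    | _ a b =>
    have hadj : (SimpleGraph.fromEdgeSet (↑s : Set (Sym2 V))).Adj a b := c.adj_of_mem_edges he
    have hmem : s(a, b) ∈ s := ((SimpleGraph.fromEdgeSet_adj _).mp hadj).1
    have hnb : ¬ (SimpleGraph.fromEdgeSet (↑s : Set (Sym2 V))).IsBridge s(a, b) := by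
      rw [SimpleGraph.isBridge_iff_adj_and_forall_cycle_notMem]
      push_neg
      exact ⟨x, c, hc, he⟩
      exact hadj
    rw [SimpleGraph.isBridge_iff] at hnb
    have hreach := not_not.mp hnb
    have hconn' : (SimpleGraph.fromEdgeSet (↑s : Set (Sym2 V)) \
        SimpleGraph.fromEdgeSet {s(a, b)}).Connected := by
      rw [SimpleGraph.connected_iff]
      exact ⟨del_edge_preconnected hconn.preconnected hreach, hconn.nonempty⟩
    have heq : SimpleGraph.fromEdgeSet (↑s : Set (Sym2 V)) \
        SimpleGraph.fromEdgeSet {s(a, b)} =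
        SimpleGraph.fromEdgeSet ↑(s.erase s(a, b)) := by
      ext u v
      simp only [SimpleGraph.sdiff_adj, SimpleGraph.fromEdgeSet_adj, Set.mem_singleton_iff,
        Finset.coe_erase, Set.mem_diff, Finset.mem_coe]
      tauto
    rw [heq] at hconn'
    have : s.card - 1 ∈ S := by
      refine ⟨s.erase s(a, b), ?_, hconn', ?_⟩
      · exact Set.Subset.trans (by exact_mod_cast Finset.coe_subset.mpr (Finset.erase_subset _ _))
          hsub
      · rw [Finset.card_erase_of_mem hmem]
    have hpos : 0 < s.card := Finset.card_pos.mpr ⟨_, hmem⟩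
    have h2 := Nat.sInf_le this
    omega

private lemma shift_add (S : Finset ℤ) (u v : ℤ) :
    shift S (u + v) = (shift S u).image (· + v) := by
  unfold shift
  rw [Finset.image_image]
  apply Finset.image_congr
  intro x _
  simp [Function.comp, add_assoc]

theorem stmt_13 {α : Type*} [Fintype α] [DecidableEq α] [Nonempty α]
    (X : α → Finset ℤ) (hX : ∀ a, (X a).Nonempty) :
    ∃ t : α → ℤ,
      (∀ t' : α → ℤ,
          (Finset.univ.biUnion fun a => shift (X a) (t a)).card
            ≤ (Finset.univ.biUnion fun a => shift (X a) (t' a)).card)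
      ∧ ∃ H : SimpleGraph α, H.Connected ∧ H.IsAcyclic
          ∧ (∀ b c, H.Adj b c → (shift (X b) (t b) ∩ shift (X c) (t c)).Nonempty)
          ∧ (∀ b c, H.Adj b c →
              ∃ u ∈ Finset.univ.biUnion X, ∃ v ∈ Finset.univ.biUnion X,
                t b - t c = u - v) := by
  classical
  set f : (α → ℤ) → ℕ := fun t => (Finset.univ.biUnion fun a => shift (X a) (t a)).card with hf
  have hSne : (Set.range f).Nonempty := ⟨f (fun _ => 0), ⟨_, rfl⟩⟩
  obtain ⟨t, ht⟩ := Nat.sInf_mem hSne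
  have hmin : ∀ t' : α → ℤ, f t ≤ f t' := fun t' => ht ▸ Nat.sInf_le ⟨t', rfl⟩
  refine ⟨t, hmin, ?_⟩
  -- the intersection graph
  set G : SimpleGraph α :=
    { Adj := fun b c => b ≠ c ∧ (shift (X b) (t b) ∩ shift (X c) (t c)).Nonempty
      symm := ⟨fun b c h => ⟨h.1.symm, by rw [Finset.inter_comm]; exact h.2⟩⟩
      loopless := ⟨fun a h => h.1 rfl⟩ } with hG
  have hshiftne : ∀ a, (shift (X a) (t a)).Nonempty := fun a => (hX a).image _
  have hGconn : G.Connected := by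
    rw [SimpleGraph.connected_iff]
    refine ⟨?_, ‹Nonempty α›⟩
    by_contra hnc
    simp only [SimpleGraph.Preconnected, not_forall] at hnc
    obtain ⟨b, c, hbc⟩ := hnc
    set C : Finset α := Finset.univ.filter (fun a => G.Reachable b a) with hC
    have hbC : b ∈ C := Finset.mem_filter.mpr ⟨Finset.mem_univ _, SimpleGraph.Reachable.refl _⟩
    have hcC : c ∉ C := fun h => hbc (Finset.mem_filter.mp h).2
    have hdisj : ∀ a ∈ C, ∀ a' ∈ Cᶜ, Disjoint (shift (X a) (t a)) (shift (X a') (t a')) := by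
      intro a ha a' ha'
      rw [Finset.mem_compl] at ha'
      by_contra hd
      rw [Finset.not_disjoint_iff_nonempty_inter] at hd
      have hne : a ≠ a' := by rintro rfl; exact ha' ha
      have : G.Reachable b a' :=
        (Finset.mem_filter.mp ha).2.trans (SimpleGraph.Adj.reachable ⟨hne, hd⟩)
      exact ha' (Finset.mem_filter.mpr ⟨Finset.mem_univ _, this⟩)
    obtain ⟨p, hp⟩ := hshiftne b
    obtain ⟨q, hq⟩ := hshiftne c
    set s : ℤ := q - p with hs
    set t' : α → ℤ := fun a => if a ∈ C then t a + s else t a with ht'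
    set A : Finset ℤ := C.biUnion (fun a => shift (X a) (t a)) with hA
    set B : Finset ℤ := Cᶜ.biUnion (fun a => shift (X a) (t a)) with hB
    have hdAB : Disjoint A B := by
      rw [hA, Finset.disjoint_biUnion_left]
      intro a ha
      rw [hB, Finset.disjoint_biUnion_right]
      intro a' ha'
      exact hdisj a ha a' ha'
    have hsplit : ∀ g : α → Finset ℤ, Finset.univ.biUnion g = C.biUnion g ∪ Cᶜ.biUnion g := by
      intro g
      ext x
      simp only [Finset.mem_biUnion, Finset.mem_union, Finset.mem_univ, true_and,
        Finset.mem_compl]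
      constructor
      · rintro ⟨a, ha⟩
        by_cases hCa : a ∈ C
        · exact Or.inl ⟨a, hCa, ha⟩
        · exact Or.inr ⟨a, hCa, ha⟩
      · rintro (⟨a, _, ha⟩ | ⟨a, _, ha⟩) <;> exact ⟨a, ha⟩
    have hft : f t = A.card + B.card := by
      rw [hf]
      simp only
      rw [hsplit, Finset.card_union_of_disjoint hdAB]
    have hft' : f t' = (A.image (· + s) ∪ B).card := by
      rw [hf]
      simp only
      rw [hsplit]
      have h1 : C.biUnion (fun a => shift (X a) (t' a)) = A.image (· + s) := by
        rw [hA, Finset.biUnion_image]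
        refine Finset.biUnion_congr rfl fun a ha => ?_
        show shift (X a) (t' a) = _
        have hta : t' a = t a + s := if_pos ha
        rw [hta, shift_add]
      have h2 : Cᶜ.biUnion (fun a => shift (X a) (t' a)) = B := by
        rw [hB]
        refine Finset.biUnion_congr rfl fun a ha => ?_
        show shift (X a) (t' a) = _
        have hta : t' a = t a := if_neg (Finset.mem_compl.mp ha)
        rw [hta]
      rw [h1, h2]
    have hqA : q ∈ A.image (· + s) := by
      refine Finset.mem_image.mpr ⟨p, ?_, by omega⟩
      exact Finset.mem_biUnion.mpr ⟨b, hbC, hp⟩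
    have hqB : q ∈ B := Finset.mem_biUnion.mpr ⟨c, Finset.mem_compl.mpr hcC, hq⟩
    have hint : 1 ≤ (A.image (· + s) ∩ B).card :=
      Finset.card_pos.mpr ⟨q, Finset.mem_inter.mpr ⟨hqA, hqB⟩⟩
    have hcardim : (A.image (· + s)).card = A.card :=
      Finset.card_image_of_injective _ (add_left_injective s)
    have hkey := Finset.card_union_add_card_inter (A.image (· + s)) B
    have : f t' < f t := by
      rw [hft, hft']
      omega
    exact absurd (hmin t') (by omega)
  obtain ⟨T, hTle, hTconn, hTac⟩ := exists_spanning_tree hGconn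
  refine ⟨T, hTconn, hTac, fun b c h => (hTle h).2, fun b c h => ?_⟩
  obtain ⟨x, hx⟩ := (hTle h).2
  rw [Finset.mem_inter] at hx
  obtain ⟨u0, hu0, hu0x⟩ := Finset.mem_image.mp hx.1
  obtain ⟨v0, hv0, hv0x⟩ := Finset.mem_image.mp hx.2
  exact ⟨v0, Finset.mem_biUnion.mpr ⟨c, Finset.mem_univ _, hv0⟩,
    u0, Finset.mem_biUnion.mpr ⟨b, Finset.mem_univ _, hu0⟩, by omega⟩
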